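/- The quantity J = a₁u₀²u₁² + a₂u₀u₁(u₀+u₁) + a₃(u₀²+u₁²) + a₄u₀u₁ + a₅(u₀+u₁) is invariant under the additive symmetric QRT map: if u₂ satisfies u₂ + u₀ = -(a₂u₁² + a₄u₁ + a₅)/(a₁u₁² + a₂u₁ + a₃) (with a₁u₁² + a₂u₁ + a₃ ≠ 0), then J(u₁, u₂) = J(u₀, u₁). -/

import Mathlib

theorem stmt_12 {K : Type*} [Field K] (a₁ a₂ a₃ a₄ a₅ : K) (u₀ u₁ u₂ : K)
    (hden : a₁ * u₁ ^ 2 + a₂ * u₁ + a₃ ≠ 0)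
    (h : u₂ + u₀ = -((a₂ * u₁ ^ 2 + a₄ * u₁ + a₅) / (a₁ * u₁ ^ 2 + a₂ * u₁ + a₃))) :
    a₁ * u₁ ^ 2 * u₂ ^ 2 + a₂ * u₁ * u₂ * (u₁ + u₂) + a₃ * (u₁ ^ 2 + u₂ ^ 2) + a₄ * u₁ * u₂ +
        a₅ * (u₁ + u₂) =
      a₁ * u₀ ^ 2 * u₁ ^ 2 + a₂ * u₀ * u₁ * (u₀ + u₁) + a₃ * (u₀ ^ 2 + u₁ ^ 2) + a₄ * u₀ * u₁ +
        a₅ * (u₀ + u₁) := by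
  rw [← neg_div, eq_div_iff hden] at h
  linear_combination (u₂ - u₀) * h
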